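/- Let c > 0 and n, r be positive integers, let w_1, …, w_r ∈ FreeGroup (Fin n), and let G be the presented group FreeGroup (Fin n) modulo the normal closure of {w_1, …, w_r}. Assume G is a finite nilpotent group of class exactly c and that the images x_1, …, x_n of the free generators form a minimal generating set of G (they generate G and no proper subset of them generates G). Let K = FreeGroup (Fin n)/γ_{c+2}(FreeGroup (Fin n)) be the relatively free nilpotent group of class c+1 on n generators y_1, …, y_n, let N be the normal closure in K of the elements w_1(y_1,…,y_n), …, w_r(y_1,…,y_n), and let M = [N, K]. Then G is capable if and only if G ≅ (K/M) / Z(K/M). -/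

import Mathlib

universe u

open scoped commutatorElement

/-- A group is capable if it is a central quotient `H/Z(H)` of some group `H`. -/
def IsCapable (G : Type u) [Group G] : Prop :=
  ∃ (H : Type u) (_ : Group H), Nonempty ((H ⧸ Subgroup.center H) ≃* G)

/-- The relatively free nilpotent group of class `c+1` on `n` generators:
`FreeGroup (Fin n)` modulo `γ_{c+2} = lowerCentralSeries _ (c+1)`. -/
abbrev RelFreeNil (n c : ℕ) : Type :=
  FreeGroup (Fin n) ⧸ (⊤ : Subgroup (FreeGroup (Fin n))).lowerCentralSeries (c + 1)

/-- The normal closure `N` in `K = RelFreeNil n c` of the images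
`w_1(y_1,…,y_n), …, w_r(y_1,…,y_n)` of the relators. -/
abbrev relatorsNormalClosure (n c r : ℕ) (w : Fin r → FreeGroup (Fin n)) :
    Subgroup (RelFreeNil n c) :=
  Subgroup.normalClosure (Set.range fun j => (QuotientGroup.mk (w j) : RelFreeNil n c))

/-- `M = [N, K]`. -/
abbrev relatorsCommutator (n c r : ℕ) (w : Fin r → FreeGroup (Fin n)) :
    Subgroup (RelFreeNil n c) :=
  ⁅relatorsNormalClosure n c r w, (⊤ : Subgroup (RelFreeNil n c))⁆

theorem map_center_mulEquiv {G H : Type*} [Group G] [Group H] (e : G ≃* H) :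
    (Subgroup.center G).map e.toMonoidHom = Subgroup.center H := by
  ext h
  simp only [Subgroup.mem_map]
  constructor
  · rintro ⟨g, hg, rfl⟩
    rw [Subgroup.mem_center_iff] at hg ⊢
    intro x
    have := hg (e.symm x)
    calc x * e g = e (e.symm x * g) := by simp [map_mul]
    _ = e (g * e.symm x) := by rw [this]
    _ = e g * x := by simp [map_mul]
  · intro hh
    refine ⟨e.symm h, ?_, by simp⟩
    rw [Subgroup.mem_center_iff] at hh ⊢
    intro x
    apply e.injective
    simp only [map_mul, MulEquiv.apply_symm_apply]
    exact hh (e x)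

/-- Transport a central quotient along a `MulEquiv`. -/
noncomputable def centerQuotCongr {G H : Type*} [Group G] [Group H] (e : G ≃* H) :
    (G ⧸ Subgroup.center G) ≃* (H ⧸ Subgroup.center H) :=
  QuotientGroup.congr _ _ e (map_center_mulEquiv e)

section Core
variable {α : Type} (rels : Set (FreeGroup α))

private abbrev Rsub : Subgroup (FreeGroup α) := Subgroup.normalClosure rels
private abbrev Msub : Subgroup (FreeGroup α) := ⁅Rsub rels, (⊤ : Subgroup (FreeGroup α))⁆
private abbrev FStar : Type := FreeGroup α ⧸ Msub rels

theorem Msub_le_Rsub : Msub rels ≤ Rsub rels :=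
  Subgroup.commutator_le_left _ _

/-- `R/[R,F]` is central in `F/[R,F]`. -/
theorem Rstar_le_center :
    (Rsub rels).map (QuotientGroup.mk' (Msub rels)) ≤ Subgroup.center (FStar rels) := by
  rintro _ ⟨r, hr, rfl⟩
  rw [Subgroup.mem_center_iff]
  intro x
  obtain ⟨y, rfl⟩ := QuotientGroup.mk'_surjective (Msub rels) x
  have hmem : ⁅r, y⁆ ∈ Msub rels :=
    Subgroup.commutator_mem_commutator hr (Subgroup.mem_top y)
  have h1 : ⁅(QuotientGroup.mk' (Msub rels)) r, (QuotientGroup.mk' (Msub rels)) y⁆ = 1 := by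
    rw [← map_commutatorElement]
    exact (QuotientGroup.eq_one_iff _).mpr hmem
  exact (commutatorElement_eq_one_iff_commute.mp h1).eq.symm

/-- Noether: `(F/[R,F])/(R/[R,F]) ≃ F/R`. -/
noncomputable def quotRstarEquiv :
    (FStar rels ⧸ (Rsub rels).map (QuotientGroup.mk' (Msub rels)))
      ≃* FreeGroup α ⧸ Rsub rels :=
  QuotientGroup.quotientQuotientEquivQuotient (Msub rels) (Rsub rels) (Msub_le_Rsub rels)

/-- If `F/R` is capable then the center of `F/[R,F]` is contained in `R/[R,F]`. -/
theorem center_le_Rstar (hcap : IsCapable (FreeGroup α ⧸ Rsub rels)) :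
    Subgroup.center (FStar rels) ≤ (Rsub rels).map (QuotientGroup.mk' (Msub rels)) := by
  obtain ⟨H, _, ⟨e⟩⟩ := hcap
  -- choose lifts of the generators
  choose f hf using fun a : α =>
    QuotientGroup.mk'_surjective (Subgroup.center H)
      (e.symm (QuotientGroup.mk (FreeGroup.of a)))
  set ψ : FreeGroup α →* H := FreeGroup.lift f with hψ
  have claim1 : ∀ x : FreeGroup α,
      (QuotientGroup.mk (ψ x) : H ⧸ Subgroup.center H) = e.symm (QuotientGroup.mk x) := by
    intro x
    have : (QuotientGroup.mk' (Subgroup.center H)).comp ψ =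
        (e.symm.toMonoidHom).comp (QuotientGroup.mk' (Rsub rels)) := by
      apply FreeGroup.ext_hom
      intro a
      simp only [MonoidHom.comp_apply, hψ, FreeGroup.lift_apply_of]
      exact hf a
    exact DFunLike.congr_fun this x
  have hRcent : ∀ r ∈ Rsub rels, ψ r ∈ Subgroup.center H := by
    intro r hr
    have : (QuotientGroup.mk (ψ r) : H ⧸ Subgroup.center H) = 1 := by
      rw [claim1 r, (QuotientGroup.eq_one_iff r).mpr hr, map_one]
    exact (QuotientGroup.eq_one_iff _).mp this
  have claim2 : Msub rels ≤ ψ.ker := by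
    rw [Subgroup.commutator_le]
    intro r hr y _
    rw [MonoidHom.mem_ker, map_commutatorElement, commutatorElement_eq_one_iff_commute]
    exact (Subgroup.mem_center_iff.mp (hRcent r hr) (ψ y)).symm
  -- now the main argument
  intro z hz
  obtain ⟨zF, rfl⟩ := QuotientGroup.mk'_surjective (Msub rels) z
  have hψz : ψ zF ∈ Subgroup.center H := by
    rw [Subgroup.mem_center_iff]
    intro h
    obtain ⟨xF, hxF⟩ := QuotientGroup.mk'_surjective (Rsub rels)
      (e (QuotientGroup.mk h))
    have hmkh : (QuotientGroup.mk (ψ xF) : H ⧸ Subgroup.center H) = QuotientGroup.mk h := by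
      rw [claim1 xF]
      rw [show (QuotientGroup.mk' (Rsub rels)) xF = QuotientGroup.mk xF from rfl] at hxF
      rw [hxF, MulEquiv.symm_apply_apply]
    have hzc : (ψ xF)⁻¹ * h ∈ Subgroup.center H := QuotientGroup.eq.mp hmkh
    have hcomm : ψ zF * ψ xF = ψ xF * ψ zF := by
      have hmem : ⁅zF, xF⁆ ∈ Msub rels := by
        have h1 : ⁅(QuotientGroup.mk' (Msub rels)) zF, (QuotientGroup.mk' (Msub rels)) xF⁆ = 1 :=
          commutatorElement_eq_one_iff_commute.mpr
            (Subgroup.mem_center_iff.mp hz ((QuotientGroup.mk' (Msub rels)) xF)).symm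
        rw [← map_commutatorElement] at h1
        exact (QuotientGroup.eq_one_iff _).mp h1
      have : ⁅ψ zF, ψ xF⁆ = 1 := by
        rw [← map_commutatorElement]
        exact claim2 hmem
      exact commutatorElement_eq_one_iff_commute.mp this
    have hzc' := Subgroup.mem_center_iff.mp hzc (ψ zF)
    calc h * ψ zF = ψ xF * (((ψ xF)⁻¹ * h) * ψ zF) := by group
    _ = ψ xF * (ψ zF * ((ψ xF)⁻¹ * h)) := by rw [hzc']
    _ = (ψ xF * ψ zF) * ((ψ xF)⁻¹ * h) := by group
    _ = (ψ zF * ψ xF) * ((ψ xF)⁻¹ * h) := by rw [hcomm]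
    _ = ψ zF * h := by group
  have hzR : zF ∈ Rsub rels := by
    have h1 : (QuotientGroup.mk (ψ zF) : H ⧸ Subgroup.center H) = 1 :=
      (QuotientGroup.eq_one_iff _).mpr hψz
    rw [claim1 zF] at h1
    have h2 : (QuotientGroup.mk zF : FreeGroup α ⧸ Rsub rels) = 1 := by
      have := congrArg e h1
      simpa using this
    exact (QuotientGroup.eq_one_iff _).mp h2
  exact ⟨zF, hzR, rfl⟩
end Core

theorem core_iff {α : Type} (rels : Set (FreeGroup α)) :
    IsCapable (FreeGroup α ⧸ Rsub rels) ↔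
      Nonempty ((FreeGroup α ⧸ Rsub rels) ≃*
        (FStar rels ⧸ Subgroup.center (FStar rels))) := by
  constructor
  · intro hcap
    haveI : ((Rsub rels).map (QuotientGroup.mk' (Msub rels))).Normal :=
      Subgroup.Normal.map inferInstance _ (QuotientGroup.mk'_surjective _)
    have heq : Subgroup.center (FStar rels) = (Rsub rels).map (QuotientGroup.mk' (Msub rels)) :=
      le_antisymm (center_le_Rstar rels hcap) (Rstar_le_center rels)
    exact ⟨((QuotientGroup.quotientMulEquivOfEq heq).trans (quotRstarEquiv rels)).symm⟩
  · rintro ⟨e⟩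
    exact ⟨FStar rels, inferInstance, ⟨e.symm⟩⟩

/-- If `N ≤ [R,F]` then `(F/N)/(closure of relators' images commutator) ≃ F/[R,F]`. -/
noncomputable def quotEquivAux {α : Type} (rels : Set (FreeGroup α)) (N : Subgroup (FreeGroup α))
    [N.Normal] (hN : N ≤ Msub rels) (s : Set (FreeGroup α ⧸ N))
    (hs : Subgroup.normalClosure s = (Rsub rels).map (QuotientGroup.mk' N)) :
    ((FreeGroup α ⧸ N) ⧸
      (⁅Subgroup.normalClosure s, (⊤ : Subgroup (FreeGroup α ⧸ N))⁆)) ≃* FStar rels := by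
  haveI : ((Msub rels).map (QuotientGroup.mk' N)).Normal :=
    Subgroup.Normal.map inferInstance _ (QuotientGroup.mk'_surjective _)
  have heq : (⁅Subgroup.normalClosure s, (⊤ : Subgroup (FreeGroup α ⧸ N))⁆ :
      Subgroup (FreeGroup α ⧸ N)) = (Msub rels).map (QuotientGroup.mk' N) := by
    rw [hs, Subgroup.map_commutator,
      Subgroup.map_top_of_surjective _ (QuotientGroup.mk'_surjective _)]
  exact (QuotientGroup.quotientMulEquivOfEq heq).trans
    (QuotientGroup.quotientQuotientEquivQuotient N (Msub rels) hN)

theorem capable_iff_special_witness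
    (c n r : ℕ) (hc : 0 < c) (hn : 0 < n) (hr : 0 < r)
    (w : Fin r → FreeGroup (Fin n))
    (hfin : Finite (PresentedGroup (Set.range w)))
    (hnil : (⊤ : Subgroup (PresentedGroup (Set.range w))).lowerCentralSeries c = ⊥)
    (hclass : (⊤ : Subgroup (PresentedGroup (Set.range w))).lowerCentralSeries (c - 1) ≠ ⊥)
    (hgen : Subgroup.closure
      (Set.range fun i : Fin n => (PresentedGroup.of i : PresentedGroup (Set.range w))) = ⊤)
    (hmin : ∀ s : Set (PresentedGroup (Set.range w)),
      s ⊂ Set.range (fun i : Fin n => (PresentedGroup.of i : PresentedGroup (Set.range w))) →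
      Subgroup.closure s ≠ ⊤) :
    IsCapable (PresentedGroup (Set.range w)) ↔
      Nonempty (PresentedGroup (Set.range w) ≃*
        ((RelFreeNil n c ⧸ relatorsCommutator n c r w) ⧸
          Subgroup.center (RelFreeNil n c ⧸ relatorsCommutator n c r w))) := by
  set rels : Set (FreeGroup (Fin n)) := Set.range w with hrels
  set N : Subgroup (FreeGroup (Fin n)) := (⊤ : Subgroup (FreeGroup (Fin n))).lowerCentralSeries (c + 1) with hNdef
  -- `γ_{c+1}(F) ≤ R` since `G` has class `≤ c`
  have hFc : (⊤ : Subgroup (FreeGroup (Fin n))).lowerCentralSeries c ≤ Rsub rels := by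
    intro x hx
    have h1 : (QuotientGroup.mk x : PresentedGroup rels) ∈
        (⊤ : Subgroup (PresentedGroup rels)).lowerCentralSeries c :=
      Subgroup.lowerCentralSeries.map (QuotientGroup.mk' (Rsub rels)) c ⟨x, hx, rfl⟩
    rw [hnil] at h1
    exact (QuotientGroup.eq_one_iff x).mp (Subgroup.mem_bot.mp h1)
  have hN : N ≤ Msub rels := by
    show (⁅(⊤ : Subgroup (FreeGroup (Fin n))).lowerCentralSeries c, ⊤⁆ : Subgroup (FreeGroup (Fin n))) ≤ _
    exact Subgroup.commutator_mono hFc le_rfl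
  have hs : Subgroup.normalClosure
      (Set.range fun j => (QuotientGroup.mk (w j) : RelFreeNil n c)) =
      (Rsub rels).map (QuotientGroup.mk' N) := by
    rw [Subgroup.map_normalClosure _ _ (QuotientGroup.mk'_surjective N), ← Set.range_comp]
    rfl
  have E := quotEquivAux rels N hN _ hs
  constructor
  · intro hcap
    obtain ⟨e⟩ := (core_iff rels).mp hcap
    exact ⟨e.trans (centerQuotCongr E).symm⟩
  · rintro ⟨e⟩
    exact ⟨RelFreeNil n c ⧸ relatorsCommutator n c r w, inferInstance, ⟨e.symm⟩⟩
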